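/- For any input list I of items with sizes in (0,1] and any arrival order, the number of bins used by Best-Fit is at most the number of bins used by Modified Best-Fit on the same list in the same order: BF(I) ≤ MBF(I). -/

import Mathlib

/-- One step of Best-Fit: the item `x` is placed in a fullest feasible bin, and a new
bin is opened iff no existing bin can accommodate it. -/
def BFStep (bins : List (List ℝ)) (x : ℝ) (bins' : List (List ℝ)) : Prop :=
  (∃ i : ℕ, ∃ h : i < bins.length,
      (bins[i]'h).sum + x ≤ 1 ∧
      (∀ j : ℕ, ∀ hj : j < bins.length,
        (bins[j]'hj).sum + x ≤ 1 → (bins[j]'hj).sum ≤ (bins[i]'h).sum) ∧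
      bins' = bins.set i (x :: (bins[i]'h)))
  ∨ ((∀ b ∈ bins, 1 < b.sum + x) ∧ bins' = bins ++ [[x]])

/-- `BFFrom bins I final`: Best-Fit starting from `bins` processes `I` and ends with `final`. -/
inductive BFFrom : List (List ℝ) → List ℝ → List (List ℝ) → Prop
  | nil (bins : List (List ℝ)) : BFFrom bins [] bins
  | cons {bins bins' final : List (List ℝ)} {x : ℝ} {xs : List ℝ} :
      BFStep bins x bins' → BFFrom bins' xs final → BFFrom bins (x :: xs) final

/-- One step of Modified Best-Fit: bins carry an open/closed flag; the item `x` goes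
into a fullest open feasible bin (or a new bin), and the receiving bin stays open
iff `x > 1/2`. -/
def MBFStep (bins : List (List ℝ × Bool)) (x : ℝ) (bins' : List (List ℝ × Bool)) : Prop :=
  ∃ st : Bool, (st = true ↔ 1 / 2 < x) ∧
    ((∃ i : ℕ, ∃ h : i < bins.length,
        (bins[i]'h).2 = true ∧ (bins[i]'h).1.sum + x ≤ 1 ∧
        (∀ j : ℕ, ∀ hj : j < bins.length,
          (bins[j]'hj).2 = true → (bins[j]'hj).1.sum + x ≤ 1 →
            (bins[j]'hj).1.sum ≤ (bins[i]'h).1.sum) ∧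
        bins' = bins.set i (x :: (bins[i]'h).1, st))
     ∨ ((∀ b ∈ bins, b.2 = true → 1 < b.1.sum + x) ∧ bins' = bins ++ [([x], st)]))

/-- `MBFFrom bins I final`: Modified Best-Fit starting from `bins` processes `I` and
ends with `final`. -/
inductive MBFFrom : List (List ℝ × Bool) → List ℝ → List (List ℝ × Bool) → Prop
  | nil (bins : List (List ℝ × Bool)) : MBFFrom bins [] bins
  | cons {bins bins' final : List (List ℝ × Bool)} {x : ℝ} {xs : List ℝ} :
      MBFStep bins x bins' → MBFFrom bins' xs final → MBFFrom bins (x :: xs) final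


attribute [local instance] Classical.propDecidable

namespace ShorAux

noncomputable section

def bbin (B : List (List ℝ)) (i : ℕ) : List ℝ := B.getD i []
def mbin (M : List (List ℝ × Bool)) (i : ℕ) : List ℝ × Bool := M.getD i ([], false)
def mOpen (M : List (List ℝ × Bool)) (i : ℕ) : Prop := (mbin M i).2 = true
def mval (M : List (List ℝ × Bool)) (i : ℕ) : ℝ := (mbin M i).1.sum

def Loose (B : List (List ℝ)) (M : List (List ℝ × Bool)) (f : ℕ → ℕ) : Finset ℕ :=
  (Finset.range M.length).filter (fun i => mOpen M i ∧ mval M i < (bbin B (f i)).sum)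

structure Inv (B : List (List ℝ)) (M : List (List ℝ × Bool)) : Prop where
  bf_ne : ∀ b ∈ B, b ≠ []
  bf_pos : ∀ b ∈ B, ∀ y ∈ b, 0 < y
  open_big : ∀ i, mOpen M i → 1/2 < mval M i
  ex : ∃ f : ℕ → ℕ,
    (∀ i, mOpen M i → f i < B.length ∧ mval M i ∈ bbin B (f i)) ∧
    (∀ i j, mOpen M i → mOpen M j → f i = f j → i = j) ∧
    B.length + (Loose B M f).card ≤ M.length

-- basic conversions
lemma bbin_eq (B : List (List ℝ)) {i : ℕ} (h : i < B.length) : bbin B i = B[i]'h :=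
  List.getD_eq_getElem B [] h

lemma mbin_eq (M : List (List ℝ × Bool)) {i : ℕ} (h : i < M.length) : mbin M i = M[i]'h :=
  List.getD_eq_getElem M ([], false) h

lemma mbin_ge (M : List (List ℝ × Bool)) {i : ℕ} (h : M.length ≤ i) : mbin M i = ([], false) := by
  unfold mbin
  rw [List.getD_eq_getElem?_getD, List.getElem?_eq_none (by omega)]
  rfl

lemma mOpen_lt {M : List (List ℝ × Bool)} {i : ℕ} (h : mOpen M i) : i < M.length := by
  by_contra hc
  have := mbin_ge M (by omega : M.length ≤ i)
  simp [mOpen, this] at h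

lemma bbin_set_ne (B : List (List ℝ)) {i j : ℕ} (h : i ≠ j) (v : List ℝ) :
    bbin (B.set i v) j = bbin B j := by
  unfold bbin
  rw [List.getD_eq_getElem?_getD, List.getD_eq_getElem?_getD, List.getElem?_set_ne h]

lemma bbin_set_self (B : List (List ℝ)) {i : ℕ} (h : i < B.length) (v : List ℝ) :
    bbin (B.set i v) i = v := by
  unfold bbin
  rw [List.getD_eq_getElem?_getD, List.getElem?_set_self h]
  rfl

lemma bbin_append (B : List (List ℝ)) {i : ℕ} (h : i < B.length) (v : List ℝ) :
    bbin (B ++ [v]) i = bbin B i := by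
  unfold bbin
  rw [List.getD_eq_getElem?_getD, List.getD_eq_getElem?_getD, List.getElem?_append]
  simp [h]

lemma mbin_set_ne (M : List (List ℝ × Bool)) {i j : ℕ} (h : i ≠ j) (v : List ℝ × Bool) :
    mbin (M.set i v) j = mbin M j := by
  unfold mbin
  rw [List.getD_eq_getElem?_getD, List.getD_eq_getElem?_getD, List.getElem?_set_ne h]

lemma mbin_set_self (M : List (List ℝ × Bool)) {i : ℕ} (h : i < M.length) (v : List ℝ × Bool) :
    mbin (M.set i v) i = v := by
  unfold mbin
  rw [List.getD_eq_getElem?_getD, List.getElem?_set_self h]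
  rfl

lemma mbin_append (M : List (List ℝ × Bool)) {i : ℕ} (h : i < M.length) (v : List ℝ × Bool) :
    mbin (M ++ [v]) i = mbin M i := by
  unfold mbin
  rw [List.getD_eq_getElem?_getD, List.getD_eq_getElem?_getD, List.getElem?_append]
  simp [h]

lemma mbin_append_last (M : List (List ℝ × Bool)) (v : List ℝ × Bool) :
    mbin (M ++ [v]) M.length = v := by
  unfold mbin
  rw [List.getD_eq_getElem?_getD, List.getElem?_concat_length]
  rfl

lemma mem_le_sum {b : List ℝ} (hpos : ∀ y ∈ b, 0 < y) {a : ℝ} (ha : a ∈ b) : a ≤ b.sum :=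
  List.single_le_sum (fun y hy => (hpos y hy).le) a ha


lemma bbin_mem {B : List (List ℝ)} {i : ℕ} (h : i < B.length) : bbin B i ∈ B := by
  rw [bbin_eq B h]; exact List.getElem_mem h

lemma bbin_append_last (B : List (List ℝ)) (v : List ℝ) :
    bbin (B ++ [v]) B.length = v := by
  unfold bbin
  rw [List.getD_eq_getElem?_getD, List.getElem?_concat_length]
  rfl

lemma mem_Loose {B : List (List ℝ)} {M : List (List ℝ × Bool)} {f : ℕ → ℕ} {i : ℕ} :
    i ∈ Loose B M f ↔ i < M.length ∧ mOpen M i ∧ mval M i < (bbin B (f i)).sum := by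
  simp only [Loose, Finset.mem_filter, Finset.mem_range]

lemma bfstep_elim {B B' : List (List ℝ)} {x : ℝ} (h : BFStep B x B') :
    (∃ i, i < B.length ∧ (bbin B i).sum + x ≤ 1 ∧
      (∀ j, j < B.length → (bbin B j).sum + x ≤ 1 → (bbin B j).sum ≤ (bbin B i).sum) ∧
      B' = B.set i (x :: bbin B i))
  ∨ ((∀ b ∈ B, 1 < b.sum + x) ∧ B' = B ++ [[x]]) := by
  rcases h with ⟨i, hi, h1, h2, h3⟩ | h
  · left
    refine ⟨i, hi, ?_, ?_, ?_⟩
    · rw [bbin_eq B hi]; exact h1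
    · intro j hj hfit
      rw [bbin_eq B hj, bbin_eq B hi]
      exact h2 j hj (by rw [bbin_eq B hj] at hfit; exact hfit)
    · rw [bbin_eq B hi]; exact h3
  · right; exact h

lemma mbfstep_elim {M M' : List (List ℝ × Bool)} {x : ℝ} (h : MBFStep M x M') :
    ∃ st : Bool, (st = true ↔ 1/2 < x) ∧
    ((∃ i, i < M.length ∧ mOpen M i ∧ mval M i + x ≤ 1 ∧
        (∀ j, j < M.length → mOpen M j → mval M j + x ≤ 1 → mval M j ≤ mval M i) ∧
        M' = M.set i (x :: (mbin M i).1, st))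
     ∨ ((∀ j, j < M.length → mOpen M j → 1 < mval M j + x) ∧ M' = M ++ [([x], st)])) := by
  obtain ⟨st, hst, h⟩ := h
  refine ⟨st, hst, ?_⟩
  rcases h with ⟨i, hi, h0, h1, h2, h3⟩ | ⟨h1, h2⟩
  · left
    refine ⟨i, hi, ?_, ?_, ?_, ?_⟩
    · unfold mOpen; rw [mbin_eq M hi]; exact h0
    · unfold mval; rw [mbin_eq M hi]; exact h1
    · intro j hj hoj hfit
      unfold mval at *
      rw [mbin_eq M hj, mbin_eq M hi]
      refine h2 j hj ?_ ?_
      · unfold mOpen at hoj; rw [mbin_eq M hj] at hoj; exact hoj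
      · rw [mbin_eq M hj] at hfit; exact hfit
    · rw [mbin_eq M hi]; exact h3
  · right
    refine ⟨?_, h2⟩
    intro j hj hoj
    unfold mOpen at hoj; unfold mval
    rw [mbin_eq M hj] at hoj ⊢
    exact h1 _ (List.getElem_mem hj) hoj

lemma card_helper {s : Finset ℕ} {i₁ i₂ : ℕ} (h : i₁ ∈ s ∨ i₂ ∈ s) (hne : i₂ ≠ i₁) :
    (insert i₂ (s.erase i₁)).card ≤ s.card := by
  rcases h with h | h
  · calc (insert i₂ (s.erase i₁)).card ≤ (s.erase i₁).card + 1 := Finset.card_insert_le _ _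
    _ = s.card - 1 + 1 := by rw [Finset.card_erase_of_mem h]
    _ ≤ s.card := by
        have : 1 ≤ s.card := Finset.card_pos.2 ⟨i₁, h⟩
        omega
  · have : i₂ ∈ s.erase i₁ := Finset.mem_erase.2 ⟨hne, h⟩
    rw [Finset.insert_eq_self.2 this]
    exact Finset.card_le_card (Finset.erase_subset _ _)


lemma mOpen_ge {M : List (List ℝ × Bool)} {i : ℕ} (h : M.length ≤ i) : ¬ mOpen M i := by
  unfold mOpen; rw [mbin_ge M h]; simp

lemma mOpen_set_ne {M : List (List ℝ × Bool)} {i j : ℕ} (h : i ≠ j) (v : List ℝ × Bool) :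
    mOpen (M.set i v) j ↔ mOpen M j := by
  unfold mOpen; rw [mbin_set_ne M h]

lemma mval_set_ne {M : List (List ℝ × Bool)} {i j : ℕ} (h : i ≠ j) (v : List ℝ × Bool) :
    mval (M.set i v) j = mval M j := by
  unfold mval; rw [mbin_set_ne M h]

lemma mOpen_set_closed {M : List (List ℝ × Bool)} {i : ℕ} (hi : i < M.length) {l : List ℝ} :
    ¬ mOpen (M.set i (l, false)) i := by
  unfold mOpen; rw [mbin_set_self M hi]; simp

lemma mOpen_append {M : List (List ℝ × Bool)} {j : ℕ} (h : j < M.length) (v : List ℝ × Bool) :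
    mOpen (M ++ [v]) j ↔ mOpen M j := by
  unfold mOpen; rw [mbin_append M h]

lemma mval_append {M : List (List ℝ × Bool)} {j : ℕ} (h : j < M.length) (v : List ℝ × Bool) :
    mval (M ++ [v]) j = mval M j := by
  unfold mval; rw [mbin_append M h]

lemma mOpen_append_last {M : List (List ℝ × Bool)} {v : List ℝ × Bool} :
    mOpen (M ++ [v]) M.length ↔ v.2 = true := by
  unfold mOpen; rw [mbin_append_last]

lemma mval_append_last {M : List (List ℝ × Bool)} {v : List ℝ × Bool} :
    mval (M ++ [v]) M.length = v.1.sum := by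
  unfold mval; rw [mbin_append_last]

end

end ShorAux
namespace ShorAux
noncomputable section

theorem step {B B' : List (List ℝ)} {M M' : List (List ℝ × Bool)} {x : ℝ}
    (hx0 : 0 < x) (hx1 : x ≤ 1) (inv : Inv B M) (hb : BFStep B x B') (hm : MBFStep M x M') :
    Inv B' M' := by
  obtain ⟨f, hf, hinj, hcount⟩ := inv.ex
  have hbne := inv.bf_ne
  have hbpos := inv.bf_pos
  have hob := inv.open_big
  have hb' := bfstep_elim hb
  obtain ⟨st, hst, hm'⟩ := mbfstep_elim hm
  have bf_ne' : ∀ b ∈ B', b ≠ [] := by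
    rcases hb' with ⟨i, hi, _, _, h3⟩ | ⟨_, h2⟩
    · subst h3; intro b hbb
      rcases List.mem_or_eq_of_mem_set hbb with h | h
      · exact hbne b h
      · subst h; simp
    · subst h2; intro b hbb
      rcases List.mem_append.1 hbb with h | h
      · exact hbne b h
      · simp at h; subst h; simp
  have bf_pos' : ∀ b ∈ B', ∀ y ∈ b, 0 < y := by
    rcases hb' with ⟨i, hi, _, _, h3⟩ | ⟨_, h2⟩
    · subst h3; intro b hbb y hy
      rcases List.mem_or_eq_of_mem_set hbb with h | h
      · exact hbpos b h y hy
      · subst h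
        rcases List.mem_cons.1 hy with h | h
        · subst h; exact hx0
        · exact hbpos _ (bbin_mem hi) y h
    · subst h2; intro b hbb y hy
      rcases List.mem_append.1 hbb with h | h
      · exact hbpos b h y hy
      · simp at h; subst h; simp at hy; subst hy; exact hx0
  have hsum_pos : ∀ i, i < B.length → 0 < (bbin B i).sum :=
    fun i hi => List.sum_pos _ (hbpos _ (bbin_mem hi)) (hbne _ (bbin_mem hi))
  have hmemle : ∀ i, mOpen M i → mval M i ≤ (bbin B (f i)).sum :=
    fun i hi => mem_le_sum (hbpos _ (bbin_mem (hf i hi).1)) (hf i hi).2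
  rcases hm' with ⟨i₁, hi₁, ho₁, hfit₁, hmax₁, hM'⟩ | ⟨hallM, hM'⟩
  · -- MBF places x in open bin i₁ (which closes)
    have hstf : st = false := by
      cases st
      · rfl
      · exfalso
        have hx2 := hst.mp rfl
        have := hob i₁ ho₁
        linarith
    subst hstf
    subst hM'
    refine ⟨bf_ne', bf_pos', ?_, ?_⟩
    · -- open_big
      intro j hj
      by_cases hji : j = i₁
      · subst hji; exact absurd hj (mOpen_set_closed hi₁)
      · have hne : i₁ ≠ j := Ne.symm hji
        rw [mOpen_set_ne hne] at hj
        rw [mval_set_ne hne]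
        exact hob j hj
    · -- the matching
      rcases hb' with ⟨i₀, hi₀, hfit₀, hmax₀, hB'⟩ | ⟨hallB, hB'⟩
      · -- BF places x in bin i₀
        subst hB'
        by_cases hex : ∃ i₂, i₂ ≠ i₁ ∧ mOpen M i₂ ∧ f i₂ = i₀
        · obtain ⟨i₂, hne₂, ho₂, hf₂⟩ := hex
          have ha₂mem : mval M i₂ ∈ bbin B i₀ := by rw [← hf₂]; exact (hf i₂ ho₂).2
          have ha₂le : mval M i₂ ≤ (bbin B i₀).sum := by rw [← hf₂]; exact hmemle i₂ ho₂
          have hopen' : ∀ j, mOpen (M.set i₁ (x :: (mbin M i₁).1, false)) j →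
              j ≠ i₁ ∧ mOpen M j := by
            intro j hj
            by_cases hji : j = i₁
            · subst hji; exact absurd hj (mOpen_set_closed hi₁)
            · exact ⟨hji, (mOpen_set_ne (Ne.symm hji) _).1 hj⟩
          by_cases hloose : mval M i₁ < (bbin B (f i₁)).sum ∨ mval M i₂ < (bbin B i₀).sum
          · -- keep f
            refine ⟨f, ?_, ?_, ?_⟩
            · intro j hj
              obtain ⟨hji, hj0⟩ := hopen' j hj
              rw [mval_set_ne (Ne.symm hji)]
              refine ⟨by rw [List.length_set]; exact (hf j hj0).1, ?_⟩
              by_cases hfj : f j = i₀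
              · have : j = i₂ := hinj j i₂ hj0 ho₂ (by rw [hfj, hf₂])
                subst this
                rw [hfj, bbin_set_self B hi₀]
                exact List.mem_cons_of_mem _ ha₂mem
              · rw [bbin_set_ne B (fun h => hfj h.symm)]
                exact (hf j hj0).2
            · intro i j hi hj hij
              exact hinj i j (hopen' i hi).2 (hopen' j hj).2 hij
            · have hsub : Loose (B.set i₀ (x :: bbin B i₀)) (M.set i₁ (x :: (mbin M i₁).1, false)) f
                  ⊆ insert i₂ ((Loose B M f).erase i₁) := by
                intro j hj
                rw [mem_Loose] at hj
                obtain ⟨hjlen, hjo, hjl⟩ := hj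
                obtain ⟨hji, hj0⟩ := hopen' j hjo
                by_cases hj₂ : j = i₂
                · subst hj₂; exact Finset.mem_insert_self _ _
                · have hfj : f j ≠ i₀ := fun h =>
                    hj₂ (hinj j i₂ hj0 ho₂ (by rw [h, hf₂]))
                  refine Finset.mem_insert_of_mem (Finset.mem_erase.2 ⟨hji, ?_⟩)
                  rw [mem_Loose]
                  rw [List.length_set] at hjlen
                  rw [mval_set_ne (Ne.symm hji)] at hjl
                  rw [bbin_set_ne B (fun h => hfj h.symm)] at hjl
                  exact ⟨hjlen, hj0, hjl⟩
              have hmem : i₁ ∈ Loose B M f ∨ i₂ ∈ Loose B M f := by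
                rcases hloose with h | h
                · exact Or.inl (mem_Loose.2 ⟨hi₁, ho₁, h⟩)
                · exact Or.inr (mem_Loose.2 ⟨mOpen_lt ho₂, ho₂, by rw [hf₂]; exact h⟩)
              have h1 := Finset.card_le_card hsub
              have h2 := card_helper hmem hne₂
              simp only [List.length_set]
              omega
          · -- rematch: both pairs tight
            push_neg at hloose
            obtain ⟨ht₁, ht₂⟩ := hloose
            have hsum₁ : (bbin B (f i₁)).sum = mval M i₁ := le_antisymm ht₁ (hmemle i₁ ho₁)
            have hsum₂ : (bbin B i₀).sum = mval M i₂ := le_antisymm ht₂ ha₂le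
            have hf₁lt : f i₁ < B.length := (hf i₁ ho₁).1
            have h12 : mval M i₁ ≤ mval M i₂ := by
              have := hmax₀ (f i₁) hf₁lt (by rw [hsum₁]; exact hfit₁)
              rw [hsum₁, hsum₂] at this
              exact this
            have h21 : mval M i₂ ≤ mval M i₁ :=
              hmax₁ i₂ (mOpen_lt ho₂) ho₂ (by rw [← hsum₂]; exact hfit₀)
            have haa : mval M i₂ = mval M i₁ := le_antisymm h21 h12
            have hne₀ : f i₁ ≠ i₀ := by
              intro h
              exact hne₂ (hinj i₂ i₁ ho₂ ho₁ (by rw [hf₂, h]))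
            refine ⟨Function.update f i₂ (f i₁), ?_, ?_, ?_⟩
            · intro j hj
              obtain ⟨hji, hj0⟩ := hopen' j hj
              rw [mval_set_ne (Ne.symm hji)]
              by_cases hj₂ : j = i₂
              · subst hj₂
                rw [Function.update_self]
                refine ⟨by rw [List.length_set]; exact hf₁lt, ?_⟩
                rw [bbin_set_ne B (fun h => hne₀ h.symm)]
                rw [haa]
                exact (hf i₁ ho₁).2
              · rw [Function.update_of_ne hj₂]
                have hfj : f j ≠ i₀ := fun h =>
                  hj₂ (hinj j i₂ hj0 ho₂ (by rw [h, hf₂]))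
                refine ⟨by rw [List.length_set]; exact (hf j hj0).1, ?_⟩
                rw [bbin_set_ne B (fun h => hfj h.symm)]
                exact (hf j hj0).2
            · intro i j hi hj hij
              obtain ⟨hii, hi0⟩ := hopen' i hi
              obtain ⟨hjj, hj0⟩ := hopen' j hj
              by_cases hi₂ : i = i₂ <;> by_cases hj₂ : j = i₂
              · rw [hi₂, hj₂]
              · subst hi₂
                rw [Function.update_self, Function.update_of_ne hj₂] at hij
                exact absurd (hinj i₁ j ho₁ hj0 hij) (Ne.symm hjj)
              · subst hj₂
                rw [Function.update_self, Function.update_of_ne hi₂] at hij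
                exact absurd (hinj i i₁ hi0 ho₁ hij) hii
              · rw [Function.update_of_ne hi₂, Function.update_of_ne hj₂] at hij
                exact hinj i j hi0 hj0 hij
            · have hsub : Loose (B.set i₀ (x :: bbin B i₀)) (M.set i₁ (x :: (mbin M i₁).1, false))
                  (Function.update f i₂ (f i₁)) ⊆ (Loose B M f).erase i₁ := by
                intro j hj
                rw [mem_Loose] at hj
                obtain ⟨hjlen, hjo, hjl⟩ := hj
                obtain ⟨hji, hj0⟩ := hopen' j hjo
                rw [List.length_set] at hjlen
                rw [mval_set_ne (Ne.symm hji)] at hjl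
                by_cases hj₂ : j = i₂
                · exfalso
                  subst hj₂
                  rw [Function.update_self, bbin_set_ne B (fun h => hne₀ h.symm),
                    hsum₁, haa] at hjl
                  exact lt_irrefl _ hjl
                · rw [Function.update_of_ne hj₂] at hjl
                  have hfj : f j ≠ i₀ := fun h =>
                    hj₂ (hinj j i₂ hj0 ho₂ (by rw [h, hf₂]))
                  rw [bbin_set_ne B (fun h => hfj h.symm)] at hjl
                  exact Finset.mem_erase.2 ⟨hji, mem_Loose.2 ⟨hjlen, hj0, hjl⟩⟩
              have h1 := Finset.card_le_card hsub
              have h2 := Finset.card_le_card (Finset.erase_subset i₁ (Loose B M f))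
              simp only [List.length_set]
              omega
        · -- i₀ not matched among surviving opens: keep f
          push_neg at hex
          refine ⟨f, ?_, ?_, ?_⟩
          · intro j hj
            by_cases hji : j = i₁
            · subst hji; exact absurd hj (mOpen_set_closed hi₁)
            · have hj0 : mOpen M j := (mOpen_set_ne (Ne.symm hji) _).1 hj
              have hfj : f j ≠ i₀ := hex j hji hj0
              rw [mval_set_ne (Ne.symm hji)]
              refine ⟨by rw [List.length_set]; exact (hf j hj0).1, ?_⟩
              rw [bbin_set_ne B (fun h => hfj h.symm)]
              exact (hf j hj0).2
          · intro i j hi hj hij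
            by_cases hii : i = i₁
            · subst hii; exact absurd hi (mOpen_set_closed hi₁)
            · by_cases hjj : j = i₁
              · subst hjj; exact absurd hj (mOpen_set_closed hi₁)
              · exact hinj i j ((mOpen_set_ne (Ne.symm hii) _).1 hi)
                  ((mOpen_set_ne (Ne.symm hjj) _).1 hj) hij
          · have hsub : Loose (B.set i₀ (x :: bbin B i₀)) (M.set i₁ (x :: (mbin M i₁).1, false)) f
                ⊆ Loose B M f := by
              intro j hj
              rw [mem_Loose] at hj ⊢
              obtain ⟨hjlen, hjo, hjl⟩ := hj
              rw [List.length_set] at hjlen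
              by_cases hji : j = i₁
              · exact absurd hjo (hji ▸ mOpen_set_closed hi₁)
              · have hj0 : mOpen M j := (mOpen_set_ne (Ne.symm hji) _).1 hjo
                have hfj : f j ≠ i₀ := hex j hji hj0
                rw [mval_set_ne (Ne.symm hji)] at hjl
                rw [bbin_set_ne B (fun h => hfj h.symm)] at hjl
                exact ⟨hjlen, hj0, hjl⟩
            have h1 := Finset.card_le_card hsub
            simp only [List.length_set]
            omega
      · -- BF opens a new bin; pair i₁ must be loose
        subst hB'
        have hl₁ : i₁ ∈ Loose B M f := by
          rw [mem_Loose]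
          refine ⟨hi₁, ho₁, ?_⟩
          have := hallB _ (bbin_mem (hf i₁ ho₁).1)
          linarith
        refine ⟨f, ?_, ?_, ?_⟩
        · intro j hj
          by_cases hji : j = i₁
          · subst hji; exact absurd hj (mOpen_set_closed hi₁)
          · have hj0 : mOpen M j := (mOpen_set_ne (Ne.symm hji) _).1 hj
            rw [mval_set_ne (Ne.symm hji)]
            refine ⟨?_, ?_⟩
            · rw [List.length_append]
              have := (hf j hj0).1
              simp
              omega
            · rw [bbin_append B (hf j hj0).1]
              exact (hf j hj0).2
        · intro i j hi hj hij
          by_cases hii : i = i₁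
          · subst hii; exact absurd hi (mOpen_set_closed hi₁)
          · by_cases hjj : j = i₁
            · subst hjj; exact absurd hj (mOpen_set_closed hi₁)
            · exact hinj i j ((mOpen_set_ne (Ne.symm hii) _).1 hi)
                ((mOpen_set_ne (Ne.symm hjj) _).1 hj) hij
        · have hsub : Loose (B ++ [[x]]) (M.set i₁ (x :: (mbin M i₁).1, false)) f
              ⊆ (Loose B M f).erase i₁ := by
            intro j hj
            rw [mem_Loose] at hj
            obtain ⟨hjlen, hjo, hjl⟩ := hj
            rw [List.length_set] at hjlen
            by_cases hji : j = i₁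
            · exact absurd hjo (hji ▸ mOpen_set_closed hi₁)
            · have hj0 : mOpen M j := (mOpen_set_ne (Ne.symm hji) _).1 hjo
              rw [mval_set_ne (Ne.symm hji)] at hjl
              rw [bbin_append B (hf j hj0).1] at hjl
              exact Finset.mem_erase.2 ⟨hji, mem_Loose.2 ⟨hjlen, hj0, hjl⟩⟩
          have h1 := Finset.card_le_card hsub
          have h2 := Finset.card_erase_of_mem hl₁
          have h3 : 1 ≤ (Loose B M f).card := Finset.card_pos.2 ⟨i₁, hl₁⟩
          simp only [List.length_set, List.length_append, List.length_cons, List.length_nil]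
          omega
  · -- MBF opens a new bin
    subst hM'
    refine ⟨bf_ne', bf_pos', ?_, ?_⟩
    · -- open_big
      intro j hj
      rcases lt_trichotomy j M.length with h | h | h
      · rw [mOpen_append h] at hj
        rw [mval_append h]
        exact hob j hj
      · subst h
        rw [mOpen_append_last] at hj
        rw [mval_append_last]
        simp only [List.sum_cons, List.sum_nil, add_zero]
        exact hst.mp hj
      · exact absurd hj (mOpen_ge (by rw [List.length_append]; simp; omega))
    · rcases hb' with ⟨i₀, hi₀, hfit₀, hmax₀, hB'⟩ | ⟨hallB, hB'⟩
      · -- BF places in bin i₀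
        subst hB'
        cases st with
        | true =>
          have hx2 := hst.mp rfl
          have hnot₀ : ∀ j, mOpen M j → f j ≠ i₀ := by
            intro j hj h
            have h1 := hmemle j hj
            rw [h] at h1
            have h2 := hob j hj
            linarith
          refine ⟨Function.update f M.length i₀, ?_, ?_, ?_⟩
          · intro j hj
            rcases lt_trichotomy j M.length with h | h | h
            · rw [mOpen_append h] at hj
              rw [Function.update_of_ne (by omega), mval_append h]
              refine ⟨by rw [List.length_set]; exact (hf j hj).1, ?_⟩
              rw [bbin_set_ne B (fun hh => hnot₀ j hj hh.symm)]
              exact (hf j hj).2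
            · subst h
              rw [Function.update_self]
              refine ⟨by rw [List.length_set]; exact hi₀, ?_⟩
              rw [mval_append_last, bbin_set_self B hi₀]
              simp
            · exact absurd hj (mOpen_ge (by rw [List.length_append]; simp; omega))
          · intro i j hi hj hij
            rcases lt_trichotomy i M.length with h1 | h1 | h1
            · rcases lt_trichotomy j M.length with h2 | h2 | h2
              · rw [Function.update_of_ne (by omega), Function.update_of_ne (by omega)] at hij
                rw [mOpen_append h1] at hi
                rw [mOpen_append h2] at hj
                exact hinj i j hi hj hij
              · subst h2
                rw [mOpen_append h1] at hi
                rw [Function.update_of_ne (by omega), Function.update_self] at hij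
                exact absurd hij (hnot₀ i hi)
              · exact absurd hj (mOpen_ge (by rw [List.length_append]; simp; omega))
            · subst h1
              rcases lt_trichotomy j M.length with h2 | h2 | h2
              · rw [mOpen_append h2] at hj
                rw [Function.update_self, Function.update_of_ne (by omega)] at hij
                exact absurd hij.symm (hnot₀ j hj)
              · omega
              · exact absurd hj (mOpen_ge (by rw [List.length_append]; simp; omega))
            · exact absurd hi (mOpen_ge (by rw [List.length_append]; simp; omega))
          · have hsub : Loose (B.set i₀ (x :: bbin B i₀)) (M ++ [([x], true)])
                (Function.update f M.length i₀) ⊆ insert M.length (Loose B M f) := by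
              intro j hj
              rw [mem_Loose] at hj
              obtain ⟨hjlen, hjo, hjl⟩ := hj
              rcases lt_trichotomy j M.length with h | h | h
              · refine Finset.mem_insert_of_mem ?_
                rw [mOpen_append h] at hjo
                rw [Function.update_of_ne (by omega)] at hjl
                rw [mval_append h, bbin_set_ne B (fun hh => hnot₀ j hjo hh.symm)] at hjl
                exact mem_Loose.2 ⟨h, hjo, hjl⟩
              · subst h; exact Finset.mem_insert_self _ _
              · exact absurd hjo (mOpen_ge (by rw [List.length_append]; simp; omega))
            have h1 := Finset.card_le_card hsub
            have h2 := Finset.card_insert_le M.length (Loose B M f)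
            simp only [List.length_set, List.length_append, List.length_cons, List.length_nil]
            omega
        | false =>
          refine ⟨f, ?_, ?_, ?_⟩
          · intro j hj
            rcases lt_trichotomy j M.length with h | h | h
            · rw [mOpen_append h] at hj
              rw [mval_append h]
              refine ⟨by rw [List.length_set]; exact (hf j hj).1, ?_⟩
              by_cases hfj : f j = i₀
              · rw [hfj, bbin_set_self B hi₀]
                refine List.mem_cons_of_mem _ ?_
                rw [← hfj]
                exact (hf j hj).2
              · rw [bbin_set_ne B (fun hh => hfj hh.symm)]
                exact (hf j hj).2
            · subst h
              rw [mOpen_append_last] at hj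
              simp at hj
            · exact absurd hj (mOpen_ge (by rw [List.length_append]; simp; omega))
          · intro i j hi hj hij
            rcases lt_trichotomy i M.length with h1 | h1 | h1
            · rcases lt_trichotomy j M.length with h2 | h2 | h2
              · rw [mOpen_append h1] at hi
                rw [mOpen_append h2] at hj
                exact hinj i j hi hj hij
              · subst h2; rw [mOpen_append_last] at hj; simp at hj
              · exact absurd hj (mOpen_ge (by rw [List.length_append]; simp; omega))
            · subst h1; rw [mOpen_append_last] at hi; simp at hi
            · exact absurd hi (mOpen_ge (by rw [List.length_append]; simp; omega))
          · by_cases hex : ∃ j₂, mOpen M j₂ ∧ f j₂ = i₀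
            · obtain ⟨j₂, hj₂, hfj₂⟩ := hex
              have hsub : Loose (B.set i₀ (x :: bbin B i₀)) (M ++ [([x], false)]) f
                  ⊆ insert j₂ (Loose B M f) := by
                intro j hj
                rw [mem_Loose] at hj
                obtain ⟨hjlen, hjo, hjl⟩ := hj
                rcases lt_trichotomy j M.length with h | h | h
                · rw [mOpen_append h] at hjo
                  by_cases hfj : f j = i₀
                  · have : j = j₂ := hinj j j₂ hjo hj₂ (by rw [hfj, hfj₂])
                    subst this
                    exact Finset.mem_insert_self _ _
                  · refine Finset.mem_insert_of_mem ?_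
                    rw [mval_append h, bbin_set_ne B (fun hh => hfj hh.symm)] at hjl
                    exact mem_Loose.2 ⟨h, hjo, hjl⟩
                · subst h; rw [mOpen_append_last] at hjo; simp at hjo
                · exact absurd hjo (mOpen_ge (by rw [List.length_append]; simp; omega))
              have h1 := Finset.card_le_card hsub
              have h2 := Finset.card_insert_le j₂ (Loose B M f)
              simp only [List.length_set, List.length_append, List.length_cons, List.length_nil]
              omega
            · push_neg at hex
              have hsub : Loose (B.set i₀ (x :: bbin B i₀)) (M ++ [([x], false)]) f
                  ⊆ Loose B M f := by
                intro j hj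
                rw [mem_Loose] at hj
                obtain ⟨hjlen, hjo, hjl⟩ := hj
                rcases lt_trichotomy j M.length with h | h | h
                · rw [mOpen_append h] at hjo
                  rw [mval_append h, bbin_set_ne B (fun hh => (hex j hjo) hh.symm)] at hjl
                  exact mem_Loose.2 ⟨h, hjo, hjl⟩
                · subst h; rw [mOpen_append_last] at hjo; simp at hjo
                · exact absurd hjo (mOpen_ge (by rw [List.length_append]; simp; omega))
              have h1 := Finset.card_le_card hsub
              simp only [List.length_set, List.length_append, List.length_cons, List.length_nil]
              omega
      · -- BF opens a new bin too
        subst hB'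
        cases st with
        | true =>
          refine ⟨Function.update f M.length B.length, ?_, ?_, ?_⟩
          · intro j hj
            rcases lt_trichotomy j M.length with h | h | h
            · rw [mOpen_append h] at hj
              rw [Function.update_of_ne (by omega), mval_append h]
              refine ⟨?_, ?_⟩
              · rw [List.length_append]
                have := (hf j hj).1
                simp
                omega
              · rw [bbin_append B (hf j hj).1]
                exact (hf j hj).2
            · subst h
              rw [Function.update_self, mval_append_last]
              refine ⟨by rw [List.length_append]; simp, ?_⟩
              rw [bbin_append_last]
              simp
            · exact absurd hj (mOpen_ge (by rw [List.length_append]; simp; omega))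
          · intro i j hi hj hij
            rcases lt_trichotomy i M.length with h1 | h1 | h1
            · rcases lt_trichotomy j M.length with h2 | h2 | h2
              · rw [Function.update_of_ne (by omega), Function.update_of_ne (by omega)] at hij
                rw [mOpen_append h1] at hi
                rw [mOpen_append h2] at hj
                exact hinj i j hi hj hij
              · subst h2
                rw [mOpen_append h1] at hi
                rw [Function.update_of_ne (by omega), Function.update_self] at hij
                have := (hf i hi).1
                omega
              · exact absurd hj (mOpen_ge (by rw [List.length_append]; simp; omega))
            · subst h1
              rcases lt_trichotomy j M.length with h2 | h2 | h2
              · rw [mOpen_append h2] at hj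
                rw [Function.update_self, Function.update_of_ne (by omega)] at hij
                have := (hf j hj).1
                omega
              · omega
              · exact absurd hj (mOpen_ge (by rw [List.length_append]; simp; omega))
            · exact absurd hi (mOpen_ge (by rw [List.length_append]; simp; omega))
          · have hsub : Loose (B ++ [[x]]) (M ++ [([x], true)])
                (Function.update f M.length B.length) ⊆ Loose B M f := by
              intro j hj
              rw [mem_Loose] at hj
              obtain ⟨hjlen, hjo, hjl⟩ := hj
              rcases lt_trichotomy j M.length with h | h | h
              · rw [mOpen_append h] at hjo
                rw [Function.update_of_ne (by omega), mval_append h,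
                  bbin_append B (hf j hjo).1] at hjl
                exact mem_Loose.2 ⟨h, hjo, hjl⟩
              · exfalso
                subst h
                rw [Function.update_self, mval_append_last, bbin_append_last] at hjl
                simp at hjl
              · exact absurd hjo (mOpen_ge (by rw [List.length_append]; simp; omega))
            have h1 := Finset.card_le_card hsub
            simp only [List.length_append, List.length_cons, List.length_nil]
            omega
        | false =>
          refine ⟨f, ?_, ?_, ?_⟩
          · intro j hj
            rcases lt_trichotomy j M.length with h | h | h
            · rw [mOpen_append h] at hj
              rw [mval_append h]
              refine ⟨?_, ?_⟩
              · rw [List.length_append]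
                have := (hf j hj).1
                simp
                omega
              · rw [bbin_append B (hf j hj).1]
                exact (hf j hj).2
            · subst h; rw [mOpen_append_last] at hj; simp at hj
            · exact absurd hj (mOpen_ge (by rw [List.length_append]; simp; omega))
          · intro i j hi hj hij
            rcases lt_trichotomy i M.length with h1 | h1 | h1
            · rcases lt_trichotomy j M.length with h2 | h2 | h2
              · rw [mOpen_append h1] at hi
                rw [mOpen_append h2] at hj
                exact hinj i j hi hj hij
              · subst h2; rw [mOpen_append_last] at hj; simp at hj
              · exact absurd hj (mOpen_ge (by rw [List.length_append]; simp; omega))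
            · subst h1; rw [mOpen_append_last] at hi; simp at hi
            · exact absurd hi (mOpen_ge (by rw [List.length_append]; simp; omega))
          · have hsub : Loose (B ++ [[x]]) (M ++ [([x], false)]) f ⊆ Loose B M f := by
              intro j hj
              rw [mem_Loose] at hj
              obtain ⟨hjlen, hjo, hjl⟩ := hj
              rcases lt_trichotomy j M.length with h | h | h
              · rw [mOpen_append h] at hjo
                rw [mval_append h, bbin_append B (hf j hjo).1] at hjl
                exact mem_Loose.2 ⟨h, hjo, hjl⟩
              · subst h; rw [mOpen_append_last] at hjo; simp at hjo
              · exact absurd hjo (mOpen_ge (by rw [List.length_append]; simp; omega))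
            have h1 := Finset.card_le_card hsub
            simp only [List.length_append, List.length_cons, List.length_nil]
            omega

end
end ShorAux

namespace ShorAux


theorem run (I : List ℝ) (hI : ∀ x ∈ I, 0 < x ∧ x ≤ 1) :
    ∀ {B M B' M'}, Inv B M → BFFrom B I B' → MBFFrom M I M' → Inv B' M' := by
  induction I with
  | nil =>
    intro B M B' M' hinv hbf hmbf
    cases hbf; cases hmbf; exact hinv
  | cons x xs ih =>
    intro B M B' M' hinv hbf hmbf
    cases hbf with
    | cons hstep hrest =>
      cases hmbf with
      | cons hstep' hrest' =>
        exact ih (fun y hy => hI y (List.mem_cons_of_mem _ hy))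
          (step (hI x List.mem_cons_self).1 (hI x List.mem_cons_self).2
            hinv hstep hstep') hrest hrest'

theorem inv_nil : Inv [] [] := by
  refine ⟨by simp, by simp, ?_, id, ?_, ?_, ?_⟩
  · intro i hi
    exact absurd hi (mOpen_ge (by simp))
  · intro i hi
    exact absurd hi (mOpen_ge (by simp))
  · intro i j hi
    exact absurd hi (mOpen_ge (by simp))
  · simp [Loose]

end ShorAux

/-- Shor's domination result: on any input list (in any order), Best-Fit never uses
more bins than Modified Best-Fit: `BF(I) ≤ MBF(I)`. -/
theorem bf_le_mbf (I : List ℝ) (hI : ∀ x ∈ I, 0 < x ∧ x ≤ 1)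
    (binsBF : List (List ℝ)) (hbf : BFFrom [] I binsBF)
    (binsMBF : List (List ℝ × Bool)) (hmbf : MBFFrom [] I binsMBF) :
    binsBF.length ≤ binsMBF.length := by
  obtain ⟨f, hf, hinj, hcount⟩ := (ShorAux.run I hI ShorAux.inv_nil hbf hmbf).ex
  omega
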